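/- arXiv:1203.2704 — 3 statements merged into one kernel-verified Lean document; each statement's English description precedes it below -/
import Mathlib

section
/- Given a valid build, its access sequence produces the same final shared state as the sequential execution of the tasks in any topological order of the dependency graph. -/
/-- A deterministic task program: a sequence of reads and writes on resources,
where each subsequent access may depend on the values previously read. -/
inductive Prog (R V : Type) where
  | done : Prog R V
  | read (r : R) (k : V → Prog R V) : Prog R V
  | write (r : R) (v : V) (k : Prog R V) : Prog R V

/-- A single recorded access: task `task` reads (`isWrite = false`) or writes
(`isWrite = true`) the value `val` of resource `res`. -/
structure Access (T R V : Type) where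
  task : T
  res : R
  isWrite : Bool
  val : V

/-- Execute a schedule (a list of task names; at each step the named task
performs its next access, if any).  Returns the remaining programs, the final
shared state, and the access sequence (trace) of the build. -/
def exec {T R V : Type} [DecidableEq T] [DecidableEq R]
    (progs : T → Prog R V) (s : R → V) :
    List T → (T → Prog R V) × (R → V) × List (Access T R V)
  | [] => (progs, s, [])
  | t :: ts =>
    match progs t with
    | .done => exec progs s ts
    | .read r k =>
        let res := exec (Function.update progs t (k (s r))) s ts
        (res.1, res.2.1, ⟨t, r, false, s r⟩ :: res.2.2)
    | .write r v k =>
        let res := exec (Function.update progs t k) (Function.update s r v) ts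
        (res.1, res.2.1, ⟨t, r, true, v⟩ :: res.2.2)

/-- The schedule completes the build: afterwards every task is done. -/
def Completes {T R V : Type} [DecidableEq T] [DecidableEq R]
    (progs : T → Prog R V) (s : R → V) (sched : List T) : Prop :=
  (exec progs s sched).1 = fun _ => Prog.done

/-- The access sequence (trace) of a build. -/
def trace {T R V : Type} [DecidableEq T] [DecidableEq R]
    (progs : T → Prog R V) (s : R → V) (sched : List T) : List (Access T R V) :=
  (exec progs s sched).2.2

/-- The final shared state of a build. -/
def finalState {T R V : Type} [DecidableEq T] [DecidableEq R]
    (progs : T → Prog R V) (s : R → V) (sched : List T) : R → V :=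
  (exec progs s sched).2.1

/-- All accesses of `f` precede all accesses of `g` in the trace `tr`. -/
def AllBefore {T R V : Type} (tr : List (Access T R V)) (f g : T) : Prop :=
  ∀ (i j : ℕ) (hi : i < tr.length) (hj : j < tr.length),
    (tr.get ⟨i, hi⟩).task = f → (tr.get ⟨j, hj⟩).task = g → i < j

/-- The trace respects the dependency DAG `D`: if `g` depends (directly or
transitively) on `f`, all accesses of `f` precede all accesses of `g`. -/
def RespectsDAG {T R V : Type} (D : T → T → Prop) (tr : List (Access T R V)) : Prop :=
  ∀ f g, Relation.TransGen D f g → AllBefore tr f g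

/-- Tasks `t₁`, `t₂` conflict during the trace `tr`: one of them writes a
resource the other reads or writes. -/
def Conflict {T R V : Type} (tr : List (Access T R V)) (t₁ t₂ : T) : Prop :=
  t₁ ≠ t₂ ∧ ∃ a ∈ tr, ∃ b ∈ tr, a.task = t₁ ∧ b.task = t₂ ∧ a.res = b.res ∧
    (a.isWrite = true ∨ b.isWrite = true)

/-- The build is valid: every conflicting pair of tasks is connected by a
directed path in the dependency graph `D`. -/
def ValidTrace {T R V : Type} (D : T → T → Prop) (tr : List (Access T R V)) : Prop :=
  ∀ t₁ t₂, Conflict tr t₁ t₂ →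
    Relation.TransGen D t₁ t₂ ∨ Relation.TransGen D t₂ t₁

/-- A build from the configuration `(D, progs, s₀)`: a schedule that completes
all tasks and whose trace respects the dependency DAG `D`. -/
def IsBuild {T R V : Type} [DecidableEq T] [DecidableEq R]
    (D : T → T → Prop) (progs : T → Prog R V) (s₀ : R → V) (sched : List T) : Prop :=
  Completes progs s₀ sched ∧ RespectsDAG D (trace progs s₀ sched)

/-- `l` is a topological ordering of `D` on the tasks. -/
def IsTopoOrdering {T : Type} (D : T → T → Prop) (l : List T) : Prop :=
  l.Nodup ∧ (∀ t : T, t ∈ l) ∧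
    ∀ (i j : ℕ) (hi : i < l.length) (hj : j < l.length),
      D (l.get ⟨i, hi⟩) (l.get ⟨j, hj⟩) → i < j

section Helpers
variable {T R V : Type} [DecidableEq T] [DecidableEq R]

lemma exec_skip {progs : T → Prog R V} {s : R → V} {a : T} {ts : List T}
    (h : progs a = Prog.done) : exec progs s (a :: ts) = exec progs s ts := by
  simp [exec, h]

lemma exec_all_done {progs : T → Prog R V} {s : R → V} (h : ∀ u, progs u = Prog.done) :
    ∀ sch : List T, exec progs s sch = (progs, s, [])
  | [] => rfl
  | a :: ts => by rw [exec_skip (h a)]; exact exec_all_done h ts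

lemma exec_fst_of_not_mem {u : T} :
    ∀ (sch : List T) (progs : T → Prog R V) (s : R → V), u ∉ sch →
      (exec progs s sch).1 u = progs u
  | [], _, _, _ => rfl
  | a :: ts, progs, s, h => by
    have hau : a ≠ u := fun e => h (e ▸ List.mem_cons_self)
    have hu : u ∉ ts := fun e => h (List.mem_cons_of_mem _ e)
    cases hpa : progs a with
    | done => rw [exec_skip hpa]; exact exec_fst_of_not_mem ts progs s hu
    | read r k =>
        simp only [exec, hpa]
        rw [exec_fst_of_not_mem ts _ s hu, Function.update_of_ne hau.symm]
    | write r v k =>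
        simp only [exec, hpa]
        rw [exec_fst_of_not_mem ts _ _ hu, Function.update_of_ne hau.symm]

lemma allBefore_of_sublist {tr' tr : List (Access T R V)} (h : List.Sublist tr' tr) {f g : T}
    (hab : AllBefore tr f g) : AllBefore tr' f g := by
  obtain ⟨e, he⟩ := List.sublist_iff_exists_fin_orderEmbedding_get_eq.mp h
  intro i j hi hj hf hg
  have key := hab (e ⟨i, hi⟩).1 (e ⟨j, hj⟩).1 (e ⟨i, hi⟩).2 (e ⟨j, hj⟩).2
    (by rw [Fin.eta, ← he]; exact hf) (by rw [Fin.eta, ← he]; exact hg)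
  have : (⟨i, hi⟩ : Fin tr'.length) < ⟨j, hj⟩ :=
    e.strictMono.lt_iff_lt.mp (by exact_mod_cast key)
  exact this

lemma respectsDAG_of_sublist {D : T → T → Prop} {tr' tr : List (Access T R V)}
    (h : List.Sublist tr' tr) (hr : RespectsDAG D tr) : RespectsDAG D tr' :=
  fun f g hfg => allBefore_of_sublist h (hr f g hfg)

lemma validTrace_of_sublist {D : T → T → Prop} {tr' tr : List (Access T R V)}
    (h : List.Sublist tr' tr) (hv : ValidTrace D tr) : ValidTrace D tr' := by
  rintro t₁ t₂ ⟨hne, a, ha, b, hb, h1, h2, h3, h4⟩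
  exact hv t₁ t₂ ⟨hne, a, h.mem ha, b, h.mem hb, h1, h2, h3, h4⟩

lemma topo_lt_of_transGen {D : T → T → Prop} {l : List T} (hl : IsTopoOrdering D l)
    {a b : T} (h : Relation.TransGen D a b) : l.idxOf a < l.idxOf b := by
  obtain ⟨hnd, hmem, htopo⟩ := hl
  have base : ∀ x y, D x y → l.idxOf x < l.idxOf y := by
    intro x y hxy
    have hx := List.idxOf_lt_length_iff.mpr (hmem x)
    have hy := List.idxOf_lt_length_iff.mpr (hmem y)
    exact htopo _ _ hx hy (by rw [List.idxOf_get, List.idxOf_get]; exact hxy)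
  induction h with
  | single h => exact base _ _ h
  | tail _ h ih => exact lt_trans ih (base _ _ h)

end Helpers
set_option linter.unusedSectionVars false

section Main
variable {T R V : Type} [DecidableEq T] [DecidableEq R]

lemma seq_front {D : T → T → Prop} {l : List T} (hl : IsTopoOrdering D l) (t : T) :
    ∀ (sched : List T) (progs : T → Prog R V) (s : R → V),
      Completes progs s sched →
      sched.Pairwise (fun a b => l.idxOf a ≤ l.idxOf b) →
      progs t ≠ Prog.done →
      (∀ u, progs u ≠ Prog.done → l.idxOf t ≤ l.idxOf u) →
      ∃ sched', exec progs s sched = exec progs s (t :: sched') ∧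
        sched'.Pairwise (fun a b => l.idxOf a ≤ l.idxOf b) := by
  intro sched
  induction sched with
  | nil =>
    intro progs s hc _ ht _
    exfalso
    unfold Completes at hc
    simp only [exec] at hc
    exact ht (congrFun hc t)
  | cons a rest ih =>
    intro progs s hc hsort ht hmin
    by_cases hpa : progs a = Prog.done
    · have he := exec_skip (progs := progs) (s := s) (ts := rest) hpa
      unfold Completes at hc
      rw [he] at hc
      obtain ⟨sched', h1, h2⟩ := ih progs s hc hsort.of_cons ht hmin
      exact ⟨sched', he.trans h1, h2⟩
    · have hmem : t ∈ a :: rest := by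
        by_contra hmem
        have := exec_fst_of_not_mem (a :: rest) progs s hmem
        unfold Completes at hc
        rw [hc] at this
        exact ht this.symm
      have hat : a = t := by
        rcases List.mem_cons.mp hmem with h | h
        · exact h.symm
        · have h1 : l.idxOf a ≤ l.idxOf t := List.rel_of_pairwise_cons hsort h
          have h2 : l.idxOf t ≤ l.idxOf a := hmin a hpa
          exact (List.idxOf_inj (hl.2.1 a)).mp (le_antisymm h1 h2)
      subst hat
      exact ⟨rest, rfl, hsort.of_cons⟩

end Main
section NC
variable {T R V : Type} [DecidableEq T] [DecidableEq R]

lemma no_conflict_head {D : T → T → Prop} {l : List T} (hl : IsTopoOrdering D l)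
    {progs : T → Prog R V} {s : R → V} {t a : T} {rest : List T}
    {A b : Access T R V} {tl : List (Access T R V)}
    (hat : a ≠ t)
    (hr : RespectsDAG D (trace progs s (a :: rest)))
    (hv : ValidTrace D (trace progs s (a :: rest)))
    (hmin : ∀ u, progs u ≠ Prog.done → l.idxOf t ≤ l.idxOf u)
    (hpa : progs a ≠ Prog.done)
    (htrace : trace progs s (a :: rest) = A :: tl)
    (hA : A.task = a) (hb : b ∈ tl) (hbt : b.task = t)
    (hres : A.res = b.res) (hw : A.isWrite = true ∨ b.isWrite = true) : False := by
  have hconf : Conflict (trace progs s (a :: rest)) a t :=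
    ⟨hat, A, htrace ▸ List.mem_cons_self, b, htrace ▸ List.mem_cons_of_mem _ hb,
      hA, hbt, hres, hw⟩
  rcases hv a t hconf with h | h
  · have h1 := topo_lt_of_transGen hl h
    have h2 := hmin a hpa
    omega
  · rw [htrace] at hr
    obtain ⟨⟨j, hj⟩, hgj⟩ := List.mem_iff_get.mp hb
    have hlen : j + 1 < (A :: tl).length := by simpa using Nat.succ_lt_succ hj
    have h0 : 0 < (A :: tl).length := by simp
    have hgj' : tl[j] = b := by simpa using hgj
    have hk := hr t a h (j + 1) 0 hlen h0 (by simp [hgj', hbt]) hA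
    omega

end NC
section Pull
variable {T R V : Type} [DecidableEq T] [DecidableEq R]

lemma pull {D : T → T → Prop} {l : List T} (hl : IsTopoOrdering D l) (t : T) :
    ∀ (sched : List T) (progs : T → Prog R V) (s : R → V),
      Completes progs s sched →
      RespectsDAG D (trace progs s sched) →
      ValidTrace D (trace progs s sched) →
      progs t ≠ Prog.done →
      (∀ u, progs u ≠ Prog.done → l.idxOf t ≤ l.idxOf u) →
      ∃ sched' : List T, sched'.length < sched.length ∧
        (exec progs s (t :: sched')).1 = (exec progs s sched).1 ∧
        (exec progs s (t :: sched')).2.1 = (exec progs s sched).2.1 ∧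
        ∃ A tr', trace progs s (t :: sched') = A :: tr' ∧
          A ∈ trace progs s sched ∧ List.Sublist tr' (trace progs s sched) := by
  intro sched
  induction sched with
  | nil =>
    intro progs s hc _ _ ht _
    exfalso; unfold Completes at hc; simp only [exec] at hc
    exact ht (congrFun hc t)
  | cons a rest ih =>
    intro progs s hc hr hv ht hmin
    by_cases hat : a = t
    · subst hat
      refine ⟨rest, Nat.lt_succ_self _, rfl, rfl, ?_⟩
      cases hpt : progs a with
      | done => exact absurd hpt ht
      | read r k =>
        have htr : trace progs s (a :: rest)
            = ⟨a, r, false, s r⟩ :: trace (Function.update progs a (k (s r))) s rest := by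
          simp [trace, exec, hpt]
        exact ⟨_, _, htr, htr ▸ List.mem_cons_self, htr ▸ List.sublist_cons_self _ _⟩
      | write r v k =>
        have htr : trace progs s (a :: rest)
            = ⟨a, r, true, v⟩ :: trace (Function.update progs a k) (Function.update s r v) rest := by
          simp [trace, exec, hpt]
        exact ⟨_, _, htr, htr ▸ List.mem_cons_self, htr ▸ List.sublist_cons_self _ _⟩
    · have hta : t ≠ a := fun e => hat e.symm
      cases hpa : progs a with
      | done =>
        have he := exec_skip (progs := progs) (s := s) (ts := rest) hpa
        have htr : trace progs s (a :: rest) = trace progs s rest := by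
          unfold trace; rw [he]
        unfold Completes at hc; rw [he] at hc
        rw [htr] at hr hv
        obtain ⟨sched', h1, h2, h3, A, tr', h4, h5, h6⟩ := ih progs s hc hr hv ht hmin
        refine ⟨sched', Nat.lt_succ_of_lt h1, ?_, ?_, A, tr', h4, ?_, ?_⟩
        · rw [he]; exact h2
        · rw [he]; exact h3
        · rw [htr]; exact h5
        · rw [htr]; exact h6
      | read r₂ k₂ =>
        have hpane : progs a ≠ Prog.done := by rw [hpa]; exact fun h => by cases h
        have htr : trace progs s (a :: rest)
            = ⟨a, r₂, false, s r₂⟩ :: trace (Function.update progs a (k₂ (s r₂))) s rest := by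
          simp [trace, exec, hpa]
        have hc' : Completes (Function.update progs a (k₂ (s r₂))) s rest := by
          unfold Completes at hc ⊢
          rw [show (exec progs s (a :: rest)).1
              = (exec (Function.update progs a (k₂ (s r₂))) s rest).1 by simp [exec, hpa]] at hc
          exact hc
        have hsub0 : List.Sublist (trace (Function.update progs a (k₂ (s r₂))) s rest)
            (trace progs s (a :: rest)) := by
          rw [htr]; exact List.sublist_cons_self _ _
        have hr' := respectsDAG_of_sublist hsub0 hr
        have hv' := validTrace_of_sublist hsub0 hv
        have ht' : Function.update progs a (k₂ (s r₂)) t ≠ Prog.done := by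
          rw [Function.update_of_ne hta]; exact ht
        have hmin' : ∀ u, Function.update progs a (k₂ (s r₂)) u ≠ Prog.done →
            l.idxOf t ≤ l.idxOf u := by
          intro u hu
          by_cases hua : u = a
          · subst hua; exact hmin u hpane
          · rw [Function.update_of_ne hua] at hu; exact hmin u hu
        obtain ⟨sched'', hlen, hP, hS, b, tr'', htr2, hb, hsub⟩ := ih _ s hc' hr' hv' ht' hmin'
        cases hpt : progs t with
        | done => exact absurd hpt ht
        | read r₁ k₁ =>
          have hPut : Function.update progs a (k₂ (s r₂)) t = Prog.read r₁ k₁ := by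
            rw [Function.update_of_ne hta, hpt]
          have htr3 : trace (Function.update progs a (k₂ (s r₂))) s (t :: sched'')
              = ⟨t, r₁, false, s r₁⟩ ::
                trace (Function.update (Function.update progs a (k₂ (s r₂))) t (k₁ (s r₁))) s sched'' := by
            simp [trace, exec, hPut]
          rw [htr3] at htr2
          injection htr2 with hbeq htreq
          have hPcomm : Function.update (Function.update progs t (k₁ (s r₁))) a (k₂ (s r₂))
              = Function.update (Function.update progs a (k₂ (s r₂))) t (k₁ (s r₁)) :=
            Function.update_comm hta _ _ _
          have hL : exec progs s (t :: a :: sched'')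
              = ((exec (Function.update (Function.update progs a (k₂ (s r₂))) t (k₁ (s r₁))) s sched'').1,
                 (exec (Function.update (Function.update progs a (k₂ (s r₂))) t (k₁ (s r₁))) s sched'').2.1,
                 ⟨t, r₁, false, s r₁⟩ :: ⟨a, r₂, false, s r₂⟩ ::
                 (exec (Function.update (Function.update progs a (k₂ (s r₂))) t (k₁ (s r₁))) s sched'').2.2) := by
            simp [exec, hpt, Function.update_of_ne hat, hpa, hPcomm]
          have hR : exec (Function.update progs a (k₂ (s r₂))) s (t :: sched'')
              = ((exec (Function.update (Function.update progs a (k₂ (s r₂))) t (k₁ (s r₁))) s sched'').1,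
                 (exec (Function.update (Function.update progs a (k₂ (s r₂))) t (k₁ (s r₁))) s sched'').2.1,
                 ⟨t, r₁, false, s r₁⟩ ::
                 (exec (Function.update (Function.update progs a (k₂ (s r₂))) t (k₁ (s r₁))) s sched'').2.2) := by
            simp [exec, hPut]
          rw [hR] at hP hS
          have hRHS1 : (exec progs s (a :: rest)).1
              = (exec (Function.update progs a (k₂ (s r₂))) s rest).1 := by simp [exec, hpa]
          have hRHS2 : (exec progs s (a :: rest)).2.1
              = (exec (Function.update progs a (k₂ (s r₂))) s rest).2.1 := by simp [exec, hpa]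
          refine ⟨a :: sched'', by simpa using Nat.succ_lt_succ hlen, ?_, ?_, ?_⟩
          · rw [hL, hRHS1]; exact hP
          · rw [hL, hRHS2]; exact hS
          · refine ⟨⟨t, r₁, false, s r₁⟩, ⟨a, r₂, false, s r₂⟩ ::
              (exec (Function.update (Function.update progs a (k₂ (s r₂))) t (k₁ (s r₁))) s sched'').2.2,
              by unfold trace; rw [hL], ?_, ?_⟩
            · rw [htr]; exact List.mem_cons_of_mem _ (hbeq ▸ hb)
            · rw [htr]
              refine List.Sublist.cons₂ _ ?_
              show List.Sublist (trace (Function.update (Function.update progs a (k₂ (s r₂))) t (k₁ (s r₁))) s sched'') _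
              rw [htreq]; exact hsub
        | write r₁ v₁ k₁ =>
          have hPut : Function.update progs a (k₂ (s r₂)) t = Prog.write r₁ v₁ k₁ := by
            rw [Function.update_of_ne hta, hpt]
          have htr3 : trace (Function.update progs a (k₂ (s r₂))) s (t :: sched'')
              = ⟨t, r₁, true, v₁⟩ ::
                trace (Function.update (Function.update progs a (k₂ (s r₂))) t k₁)
                  (Function.update s r₁ v₁) sched'' := by
            simp [trace, exec, hPut]
          rw [htr3] at htr2
          injection htr2 with hbeq htreq
          have hne12 : r₁ ≠ r₂ := by
            intro h12
            exact no_conflict_head hl hat hr hv hmin hpane htr rfl hb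
              (by rw [← hbeq]) (by rw [← hbeq]; exact h12.symm) (Or.inr (by rw [← hbeq]))
          have hPcomm : Function.update (Function.update progs t k₁) a (k₂ (s r₂))
              = Function.update (Function.update progs a (k₂ (s r₂))) t k₁ :=
            Function.update_comm hta _ _ _
          have hL : exec progs s (t :: a :: sched'')
              = ((exec (Function.update (Function.update progs a (k₂ (s r₂))) t k₁) (Function.update s r₁ v₁) sched'').1,
                 (exec (Function.update (Function.update progs a (k₂ (s r₂))) t k₁) (Function.update s r₁ v₁) sched'').2.1,
                 ⟨t, r₁, true, v₁⟩ :: ⟨a, r₂, false, s r₂⟩ ::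
                 (exec (Function.update (Function.update progs a (k₂ (s r₂))) t k₁) (Function.update s r₁ v₁) sched'').2.2) := by
            simp [exec, hpt, Function.update_of_ne hat, hpa, hPcomm,
              Function.update_of_ne (Ne.symm hne12)]
          have hR : exec (Function.update progs a (k₂ (s r₂))) s (t :: sched'')
              = ((exec (Function.update (Function.update progs a (k₂ (s r₂))) t k₁) (Function.update s r₁ v₁) sched'').1,
                 (exec (Function.update (Function.update progs a (k₂ (s r₂))) t k₁) (Function.update s r₁ v₁) sched'').2.1,
                 ⟨t, r₁, true, v₁⟩ ::
                 (exec (Function.update (Function.update progs a (k₂ (s r₂))) t k₁) (Function.update s r₁ v₁) sched'').2.2) := by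
            simp [exec, hPut]
          rw [hR] at hP hS
          have hRHS1 : (exec progs s (a :: rest)).1
              = (exec (Function.update progs a (k₂ (s r₂))) s rest).1 := by simp [exec, hpa]
          have hRHS2 : (exec progs s (a :: rest)).2.1
              = (exec (Function.update progs a (k₂ (s r₂))) s rest).2.1 := by simp [exec, hpa]
          refine ⟨a :: sched'', by simpa using Nat.succ_lt_succ hlen, ?_, ?_, ?_⟩
          · rw [hL, hRHS1]; exact hP
          · rw [hL, hRHS2]; exact hS
          · refine ⟨⟨t, r₁, true, v₁⟩, ⟨a, r₂, false, s r₂⟩ ::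
              (exec (Function.update (Function.update progs a (k₂ (s r₂))) t k₁) (Function.update s r₁ v₁) sched'').2.2,
              by unfold trace; rw [hL], ?_, ?_⟩
            · rw [htr]; exact List.mem_cons_of_mem _ (hbeq ▸ hb)
            · rw [htr]
              refine List.Sublist.cons₂ _ ?_
              show List.Sublist (trace (Function.update (Function.update progs a (k₂ (s r₂))) t k₁) (Function.update s r₁ v₁) sched'') _
              rw [htreq]; exact hsub
      | write r₂ v₂ k₂ =>
        have hpane : progs a ≠ Prog.done := by rw [hpa]; exact fun h => by cases h
        have htr : trace progs s (a :: rest)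
            = ⟨a, r₂, true, v₂⟩ :: trace (Function.update progs a k₂) (Function.update s r₂ v₂) rest := by
          simp [trace, exec, hpa]
        have hc' : Completes (Function.update progs a k₂) (Function.update s r₂ v₂) rest := by
          unfold Completes at hc ⊢
          rw [show (exec progs s (a :: rest)).1
              = (exec (Function.update progs a k₂) (Function.update s r₂ v₂) rest).1 by simp [exec, hpa]] at hc
          exact hc
        have hsub0 : List.Sublist (trace (Function.update progs a k₂) (Function.update s r₂ v₂) rest)
            (trace progs s (a :: rest)) := by
          rw [htr]; exact List.sublist_cons_self _ _
        have hr' := respectsDAG_of_sublist hsub0 hr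
        have hv' := validTrace_of_sublist hsub0 hv
        have ht' : Function.update progs a k₂ t ≠ Prog.done := by
          rw [Function.update_of_ne hta]; exact ht
        have hmin' : ∀ u, Function.update progs a k₂ u ≠ Prog.done →
            l.idxOf t ≤ l.idxOf u := by
          intro u hu
          by_cases hua : u = a
          · subst hua; exact hmin u hpane
          · rw [Function.update_of_ne hua] at hu; exact hmin u hu
        obtain ⟨sched'', hlen, hP, hS, b, tr'', htr2, hb, hsub⟩ := ih _ _ hc' hr' hv' ht' hmin'
        cases hpt : progs t with
        | done => exact absurd hpt ht
        | read r₁ k₁ =>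
          have hPut : Function.update progs a k₂ t = Prog.read r₁ k₁ := by
            rw [Function.update_of_ne hta, hpt]
          have htr3 : trace (Function.update progs a k₂) (Function.update s r₂ v₂) (t :: sched'')
              = ⟨t, r₁, false, Function.update s r₂ v₂ r₁⟩ ::
                trace (Function.update (Function.update progs a k₂) t (k₁ (Function.update s r₂ v₂ r₁)))
                  (Function.update s r₂ v₂) sched'' := by
            simp [trace, exec, hPut]
          rw [htr3] at htr2
          injection htr2 with hbeq htreq
          have hne12 : r₁ ≠ r₂ := by
            intro h12
            exact no_conflict_head hl hat hr hv hmin hpane htr rfl hb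
              (by rw [← hbeq]) (by rw [← hbeq]; exact h12.symm) (Or.inl rfl)
          have hv12 : Function.update s r₂ v₂ r₁ = s r₁ := Function.update_of_ne hne12 _ _
          rw [hv12] at hbeq htreq
          have hPcomm : Function.update (Function.update progs t (k₁ (s r₁))) a k₂
              = Function.update (Function.update progs a k₂) t (k₁ (s r₁)) :=
            Function.update_comm hta _ _ _
          have hL : exec progs s (t :: a :: sched'')
              = ((exec (Function.update (Function.update progs a k₂) t (k₁ (s r₁))) (Function.update s r₂ v₂) sched'').1,
                 (exec (Function.update (Function.update progs a k₂) t (k₁ (s r₁))) (Function.update s r₂ v₂) sched'').2.1,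
                 ⟨t, r₁, false, s r₁⟩ :: ⟨a, r₂, true, v₂⟩ ::
                 (exec (Function.update (Function.update progs a k₂) t (k₁ (s r₁))) (Function.update s r₂ v₂) sched'').2.2) := by
            simp [exec, hpt, Function.update_of_ne hat, hpa, hPcomm]
          have hR : exec (Function.update progs a k₂) (Function.update s r₂ v₂) (t :: sched'')
              = ((exec (Function.update (Function.update progs a k₂) t (k₁ (s r₁))) (Function.update s r₂ v₂) sched'').1,
                 (exec (Function.update (Function.update progs a k₂) t (k₁ (s r₁))) (Function.update s r₂ v₂) sched'').2.1,
                 ⟨t, r₁, false, s r₁⟩ ::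
                 (exec (Function.update (Function.update progs a k₂) t (k₁ (s r₁))) (Function.update s r₂ v₂) sched'').2.2) := by
            simp [exec, hPut, hv12]
          rw [hR] at hP hS
          have hRHS1 : (exec progs s (a :: rest)).1
              = (exec (Function.update progs a k₂) (Function.update s r₂ v₂) rest).1 := by simp [exec, hpa]
          have hRHS2 : (exec progs s (a :: rest)).2.1
              = (exec (Function.update progs a k₂) (Function.update s r₂ v₂) rest).2.1 := by simp [exec, hpa]
          refine ⟨a :: sched'', by simpa using Nat.succ_lt_succ hlen, ?_, ?_, ?_⟩
          · rw [hL, hRHS1]; exact hP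
          · rw [hL, hRHS2]; exact hS
          · refine ⟨⟨t, r₁, false, s r₁⟩, ⟨a, r₂, true, v₂⟩ ::
              (exec (Function.update (Function.update progs a k₂) t (k₁ (s r₁))) (Function.update s r₂ v₂) sched'').2.2,
              by unfold trace; rw [hL], ?_, ?_⟩
            · rw [htr]; exact List.mem_cons_of_mem _ (hbeq ▸ hb)
            · rw [htr]
              refine List.Sublist.cons₂ _ ?_
              show List.Sublist (trace (Function.update (Function.update progs a k₂) t (k₁ (s r₁))) (Function.update s r₂ v₂) sched'') _
              rw [htreq]; exact hsub
        | write r₁ v₁ k₁ =>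
          have hPut : Function.update progs a k₂ t = Prog.write r₁ v₁ k₁ := by
            rw [Function.update_of_ne hta, hpt]
          have htr3 : trace (Function.update progs a k₂) (Function.update s r₂ v₂) (t :: sched'')
              = ⟨t, r₁, true, v₁⟩ ::
                trace (Function.update (Function.update progs a k₂) t k₁)
                  (Function.update (Function.update s r₂ v₂) r₁ v₁) sched'' := by
            simp [trace, exec, hPut]
          rw [htr3] at htr2
          injection htr2 with hbeq htreq
          have hne12 : r₁ ≠ r₂ := by
            intro h12
            exact no_conflict_head hl hat hr hv hmin hpane htr rfl hb
              (by rw [← hbeq]) (by rw [← hbeq]; exact h12.symm) (Or.inl rfl)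
          have hPcomm : Function.update (Function.update progs t k₁) a k₂
              = Function.update (Function.update progs a k₂) t k₁ :=
            Function.update_comm hta _ _ _
          have hScomm : Function.update (Function.update s r₁ v₁) r₂ v₂
              = Function.update (Function.update s r₂ v₂) r₁ v₁ :=
            Function.update_comm hne12 _ _ _
          have hL : exec progs s (t :: a :: sched'')
              = ((exec (Function.update (Function.update progs a k₂) t k₁) (Function.update (Function.update s r₂ v₂) r₁ v₁) sched'').1,
                 (exec (Function.update (Function.update progs a k₂) t k₁) (Function.update (Function.update s r₂ v₂) r₁ v₁) sched'').2.1,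
                 ⟨t, r₁, true, v₁⟩ :: ⟨a, r₂, true, v₂⟩ ::
                 (exec (Function.update (Function.update progs a k₂) t k₁) (Function.update (Function.update s r₂ v₂) r₁ v₁) sched'').2.2) := by
            simp [exec, hpt, Function.update_of_ne hat, hpa, hPcomm, hScomm]
          have hR : exec (Function.update progs a k₂) (Function.update s r₂ v₂) (t :: sched'')
              = ((exec (Function.update (Function.update progs a k₂) t k₁) (Function.update (Function.update s r₂ v₂) r₁ v₁) sched'').1,
                 (exec (Function.update (Function.update progs a k₂) t k₁) (Function.update (Function.update s r₂ v₂) r₁ v₁) sched'').2.1,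
                 ⟨t, r₁, true, v₁⟩ ::
                 (exec (Function.update (Function.update progs a k₂) t k₁) (Function.update (Function.update s r₂ v₂) r₁ v₁) sched'').2.2) := by
            simp [exec, hPut]
          rw [hR] at hP hS
          have hRHS1 : (exec progs s (a :: rest)).1
              = (exec (Function.update progs a k₂) (Function.update s r₂ v₂) rest).1 := by simp [exec, hpa]
          have hRHS2 : (exec progs s (a :: rest)).2.1
              = (exec (Function.update progs a k₂) (Function.update s r₂ v₂) rest).2.1 := by simp [exec, hpa]
          refine ⟨a :: sched'', by simpa using Nat.succ_lt_succ hlen, ?_, ?_, ?_⟩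
          · rw [hL, hRHS1]; exact hP
          · rw [hL, hRHS2]; exact hS
          · refine ⟨⟨t, r₁, true, v₁⟩, ⟨a, r₂, true, v₂⟩ ::
              (exec (Function.update (Function.update progs a k₂) t k₁) (Function.update (Function.update s r₂ v₂) r₁ v₁) sched'').2.2,
              by unfold trace; rw [hL], ?_, ?_⟩
            · rw [htr]; exact List.mem_cons_of_mem _ (hbeq ▸ hb)
            · rw [htr]
              refine List.Sublist.cons₂ _ ?_
              show List.Sublist (trace (Function.update (Function.update progs a k₂) t k₁) (Function.update (Function.update s r₂ v₂) r₁ v₁) sched'') _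
              rw [htreq]; exact hsub

end Pull
section Final
variable {T R V : Type} [DecidableEq T] [DecidableEq R]

lemma main_aux {D : T → T → Prop} {l : List T} [Fintype T] (hl : IsTopoOrdering D l) :
    ∀ (n : ℕ) (sched₁ : List T) (progs : T → Prog R V) (s : R → V) (sched₂ : List T),
      sched₁.length ≤ n →
      Completes progs s sched₁ → RespectsDAG D (trace progs s sched₁) →
      ValidTrace D (trace progs s sched₁) →
      sched₂.Pairwise (fun a b => l.idxOf a ≤ l.idxOf b) →
      Completes progs s sched₂ →
      (exec progs s sched₁).2.1 = (exec progs s sched₂).2.1 := by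
  intro n
  induction n with
  | zero =>
    intro sched₁ progs s sched₂ hn hc1 _ _ _ _
    have h0 : sched₁ = [] := List.length_eq_zero_iff.mp (Nat.le_zero.mp hn)
    subst h0
    unfold Completes at hc1; simp only [exec] at hc1
    rw [exec_all_done (fun u => congrFun hc1 u) sched₂]
    simp [exec]
  | succ m ihn =>
    intro sched₁ progs s sched₂ hn hc1 hr1 hv1 hs2 hc2
    by_cases hall : ∀ u, progs u = Prog.done
    · rw [exec_all_done hall sched₁, exec_all_done hall sched₂]
    · push_neg at hall
      classical
      obtain ⟨u₀, hu₀⟩ := hall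
      have hne : (Finset.univ.filter (fun u => progs u ≠ Prog.done)).Nonempty :=
        ⟨u₀, by simp [hu₀]⟩
      obtain ⟨t, htmem, htmin⟩ := Finset.exists_min_image _ (fun u => l.idxOf u) hne
      simp only [Finset.mem_filter, Finset.mem_univ, true_and] at htmem
      have hmin : ∀ u, progs u ≠ Prog.done → l.idxOf t ≤ l.idxOf u := by
        intro u hu; exact htmin u (by simp [hu])
      obtain ⟨sched', hlen, hP, hS, A, tr', htr', hA, hsub⟩ :=
        pull hl t sched₁ progs s hc1 hr1 hv1 htmem hmin
      obtain ⟨sched₂', he2, hs2'⟩ := seq_front hl t sched₂ progs s hc2 hs2 htmem hmin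
      rw [← hS, he2]
      have hc1' : Completes progs s (t :: sched') := by
        unfold Completes at hc1 ⊢; rw [hP]; exact hc1
      have hc2' : Completes progs s (t :: sched₂') := by
        unfold Completes at hc2 ⊢; rw [← he2]; exact hc2
      cases hpt : progs t with
      | done => exact absurd hpt htmem
      | read r k =>
        have hstep : trace progs s (t :: sched')
            = ⟨t, r, false, s r⟩ :: trace (Function.update progs t (k (s r))) s sched' := by
          simp [trace, exec, hpt]
        rw [hstep] at htr'
        injection htr' with _ htreq
        have hsub' : List.Sublist (trace (Function.update progs t (k (s r))) s sched')
            (trace progs s sched₁) := by rw [htreq]; exact hsub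
        have hr' := respectsDAG_of_sublist hsub' hr1
        have hv' := validTrace_of_sublist hsub' hv1
        have hc1'' : Completes (Function.update progs t (k (s r))) s sched' := by
          unfold Completes at hc1' ⊢
          rw [show (exec progs s (t :: sched')).1
              = (exec (Function.update progs t (k (s r))) s sched').1 by simp [exec, hpt]] at hc1'
          exact hc1'
        have hc2'' : Completes (Function.update progs t (k (s r))) s sched₂' := by
          unfold Completes at hc2' ⊢
          rw [show (exec progs s (t :: sched₂')).1
              = (exec (Function.update progs t (k (s r))) s sched₂').1 by simp [exec, hpt]] at hc2'
          exact hc2'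
        have hrec := ihn sched' (Function.update progs t (k (s r))) s sched₂'
          (by omega) hc1'' hr' hv' hs2' hc2''
        have e1 : (exec progs s (t :: sched')).2.1
            = (exec (Function.update progs t (k (s r))) s sched').2.1 := by simp [exec, hpt]
        have e2 : (exec progs s (t :: sched₂')).2.1
            = (exec (Function.update progs t (k (s r))) s sched₂').2.1 := by simp [exec, hpt]
        rw [e1, e2]; exact hrec
      | write r v k =>
        have hstep : trace progs s (t :: sched')
            = ⟨t, r, true, v⟩ :: trace (Function.update progs t k) (Function.update s r v) sched' := by
          simp [trace, exec, hpt]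
        rw [hstep] at htr'
        injection htr' with _ htreq
        have hsub' : List.Sublist (trace (Function.update progs t k) (Function.update s r v) sched')
            (trace progs s sched₁) := by rw [htreq]; exact hsub
        have hr' := respectsDAG_of_sublist hsub' hr1
        have hv' := validTrace_of_sublist hsub' hv1
        have hc1'' : Completes (Function.update progs t k) (Function.update s r v) sched' := by
          unfold Completes at hc1' ⊢
          rw [show (exec progs s (t :: sched')).1
              = (exec (Function.update progs t k) (Function.update s r v) sched').1 by simp [exec, hpt]] at hc1'
          exact hc1'
        have hc2'' : Completes (Function.update progs t k) (Function.update s r v) sched₂' := by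
          unfold Completes at hc2' ⊢
          rw [show (exec progs s (t :: sched₂')).1
              = (exec (Function.update progs t k) (Function.update s r v) sched₂').1 by simp [exec, hpt]] at hc2'
          exact hc2'
        have hrec := ihn sched' (Function.update progs t k) (Function.update s r v) sched₂'
          (by omega) hc1'' hr' hv' hs2' hc2''
        have e1 : (exec progs s (t :: sched')).2.1
            = (exec (Function.update progs t k) (Function.update s r v) sched').2.1 := by simp [exec, hpt]
        have e2 : (exec progs s (t :: sched₂')).2.1
            = (exec (Function.update progs t k) (Function.update s r v) sched₂').2.1 := by simp [exec, hpt]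
        rw [e1, e2]; exact hrec

end Final
/-- A valid build produces the same final shared state as the sequential
execution of the tasks in any topological order of the dependency graph:
if `sched₁` is a valid build, and `sched₂` is a completing schedule that runs
each task to completion in the order given by a topological ordering `l`
(i.e. `sched₂` is sorted by position in `l`), then both produce the same
final state. -/
theorem valid_build_eq_sequential {T R V : Type} [DecidableEq T] [DecidableEq R]
    [Fintype T] (D : T → T → Prop) (progs : T → Prog R V) (s₀ : R → V)
    (sched₁ sched₂ : List T)
    (h₁ : IsBuild D progs s₀ sched₁)
    (hvalid : ValidTrace D (trace progs s₀ sched₁))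
    (l : List T) (hl : IsTopoOrdering D l)
    (hseq : sched₂.Pairwise fun a b => l.idxOf a ≤ l.idxOf b)
    (h₂ : Completes progs s₀ sched₂) :
    finalState progs s₀ sched₁ = finalState progs s₀ sched₂ := by
  obtain ⟨hc1, hr1⟩ := h₁
  exact main_aux hl sched₁.length sched₁ progs s₀ sched₂ le_rfl hc1 hr1 hvalid hseq h₂
end

section
/- If some build from a given configuration (dependency graph and initial shared state) is valid, then every build from that configuration is valid, and all of them produce the same final shared state. -/
namespace VC
variable {T R V : Type} [DecidableEq T] [DecidableEq R]

def headInfo : Prog R V → Option (R × Bool)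
  | .done => none
  | .read r _ => some (r, false)
  | .write r _ _ => some (r, true)

def step (progs : T → Prog R V) (s : R → V) (t : T) :
    (T → Prog R V) × (R → V) × Option (Access T R V) :=
  match progs t with
  | .done => (progs, s, none)
  | .read r k => (Function.update progs t (k (s r)), s, some ⟨t, r, false, s r⟩)
  | .write r v k => (Function.update progs t k, Function.update s r v, some ⟨t, r, true, v⟩)

lemma exec_cons (progs : T → Prog R V) (s : R → V) (t : T) (ts : List T) :
    exec progs s (t :: ts) =
      ((exec (step progs s t).1 (step progs s t).2.1 ts).1,
       (exec (step progs s t).1 (step progs s t).2.1 ts).2.1,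
       (step progs s t).2.2.toList ++ (exec (step progs s t).1 (step progs s t).2.1 ts).2.2) := by
  cases h : progs t <;> simp [exec, step, h]

lemma step_fst_of_ne (progs : T → Prog R V) (s : R → V) {t u : T} (h : u ≠ t) :
    (step progs s t).1 u = progs u := by
  cases hp : progs t <;> simp [step, hp, Function.update_of_ne h]

lemma step_acc_some (progs : T → Prog R V) (s : R → V) {t : T} {r₀ : R} {w₀ : Bool}
    (h : headInfo (progs t) = some (r₀, w₀)) :
    ∃ v, (step progs s t).2.2 = some ⟨t, r₀, w₀, v⟩ := by
  cases hp : progs t <;> simp_all [step, headInfo]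

end VC
namespace VC
variable {T R V : Type} [DecidableEq T] [DecidableEq R]

lemma swap (progs : T → Prog R V) (s : R → V) (t u : T) (ts : List T)
    (hne : t ≠ u)
    (hc : ∀ r₁ w₁ r₂ w₂, headInfo (progs t) = some (r₁, w₁) →
        headInfo (progs u) = some (r₂, w₂) → r₁ = r₂ → w₁ = false ∧ w₂ = false) :
    (exec progs s (t :: u :: ts)).1 = (exec progs s (u :: t :: ts)).1 ∧
    (exec progs s (t :: u :: ts)).2.1 = (exec progs s (u :: t :: ts)).2.1 ∧
    ∃ rest, (exec progs s (t :: u :: ts)).2.2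
        = (step progs s t).2.2.toList ++ (step progs s u).2.2.toList ++ rest ∧
      (exec progs s (u :: t :: ts)).2.2
        = (step progs s u).2.2.toList ++ (step progs s t).2.2.toList ++ rest := by
  have hut : u ≠ t := hne.symm
  cases hpt : progs t with
  | done =>
    cases hpu : progs u with
    | done =>
      refine ⟨?_, ?_, (exec progs s ts).2.2, ?_, ?_⟩ <;>
        simp [exec, step, hpt, hpu]
    | read r' k' =>
      refine ⟨?_, ?_, (exec (Function.update progs u (k' (s r'))) s ts).2.2, ?_, ?_⟩ <;>
        simp [exec, step, hpt, hpu, Function.update_of_ne hne]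
    | write r' v' k' =>
      refine ⟨?_, ?_, (exec (Function.update progs u k') (Function.update s r' v') ts).2.2, ?_, ?_⟩ <;>
        simp [exec, step, hpt, hpu, Function.update_of_ne hne]
  | read r k =>
    cases hpu : progs u with
    | done =>
      refine ⟨?_, ?_, (exec (Function.update progs t (k (s r))) s ts).2.2, ?_, ?_⟩ <;>
        simp [exec, step, hpt, hpu, Function.update_of_ne hut]
    | read r' k' =>
      refine ⟨?_, ?_, (exec (Function.update (Function.update progs t (k (s r))) u (k' (s r'))) s ts).2.2, ?_, ?_⟩ <;>
        simp [exec, step, hpt, hpu, Function.update_of_ne hut, Function.update_of_ne hne,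
          Function.update_comm hne]
    | write r' v' k' =>
      have hrr : r ≠ r' := by
        intro h
        exact absurd ((hc r false r' true (by simp [headInfo, hpt]) (by simp [headInfo, hpu]) h).2) (by simp)
      refine ⟨?_, ?_, (exec (Function.update (Function.update progs t (k (s r))) u k')
          (Function.update s r' v') ts).2.2, ?_, ?_⟩ <;>
        simp [exec, step, hpt, hpu, Function.update_of_ne hut, Function.update_of_ne hne,
          Function.update_comm hne, Function.update_of_ne hrr]
  | write r v k =>
    cases hpu : progs u with
    | done =>
      refine ⟨?_, ?_, (exec (Function.update progs t k) (Function.update s r v) ts).2.2, ?_, ?_⟩ <;>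
        simp [exec, step, hpt, hpu, Function.update_of_ne hut]
    | read r' k' =>
      have hrr : r ≠ r' := by
        intro h
        exact absurd ((hc r true r' false (by simp [headInfo, hpt]) (by simp [headInfo, hpu]) h).1) (by simp)
      refine ⟨?_, ?_, (exec (Function.update (Function.update progs t k) u (k' (s r')))
          (Function.update s r v) ts).2.2, ?_, ?_⟩ <;>
        simp [exec, step, hpt, hpu, Function.update_of_ne hut, Function.update_of_ne hne,
          Function.update_comm hne, Function.update_of_ne hrr.symm]
    | write r' v' k' =>
      have hrr : r ≠ r' := by
        intro h
        exact absurd ((hc r true r' true (by simp [headInfo, hpt]) (by simp [headInfo, hpu]) h).1) (by simp)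
      refine ⟨?_, ?_, (exec (Function.update (Function.update progs t k) u k')
          (Function.update (Function.update s r v) r' v') ts).2.2, ?_, ?_⟩ <;>
        simp [exec, step, hpt, hpu, Function.update_of_ne hut, Function.update_of_ne hne,
          Function.update_comm hne, Function.update_comm hrr]
end VC
namespace VC
variable {T R V : Type} [DecidableEq T] [DecidableEq R]

lemma exec_all_done : ∀ (σ : List T) (progs : T → Prog R V) (s : R → V),
    (∀ t, progs t = Prog.done) → exec progs s σ = (progs, s, []) := by
  intro σ
  induction σ with
  | nil => intro progs s _; rfl
  | cons u σ₂ ih => intro progs s h; simp [exec, h u, ih _ _ h]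

lemma exists_access (t : T) (r₀ : R) (w₀ : Bool) : ∀ (σ : List T) (progs : T → Prog R V) (s : R → V),
    (exec progs s σ).1 = (fun _ => Prog.done) →
    headInfo (progs t) = some (r₀, w₀) →
    ∃ v, (⟨t, r₀, w₀, v⟩ : Access T R V) ∈ (exec progs s σ).2.2 := by
  intro σ
  induction σ with
  | nil =>
    intro progs s hc hh
    have : progs t = Prog.done := congrFun hc t
    simp [this, headInfo] at hh
  | cons u σ₂ ih =>
    intro progs s hc hh
    rcases eq_or_ne u t with rfl | hne
    · cases hp : progs u with
      | done => simp [hp, headInfo] at hh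
      | read r k =>
        refine ⟨s r, ?_⟩
        simp [headInfo, hp] at hh
        simp [exec, hp, hh.1, hh.2]
      | write r v k =>
        refine ⟨v, ?_⟩
        simp [headInfo, hp] at hh
        simp [exec, hp, hh.1, hh.2]
    · have hc' := hc
      rw [exec_cons] at hc' ⊢
      have hh' : headInfo ((step progs s u).1 t) = some (r₀, w₀) := by
        rw [step_fst_of_ne progs s hne.symm]; exact hh
      obtain ⟨v, hv⟩ := ih _ _ hc' hh'
      exact ⟨v, by simp [hv]⟩

lemma mem_ne_done : ∀ (σ : List T) (progs : T → Prog R V) (s : R → V) (b : Access T R V),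
    b ∈ (exec progs s σ).2.2 → progs b.task ≠ Prog.done := by
  intro σ
  induction σ with
  | nil => intro progs s b hb; simp [exec] at hb
  | cons u σ₂ ih =>
    intro progs s b hb
    cases hp : progs u with
    | done =>
      simp only [exec, hp] at hb
      exact ih _ _ _ hb
    | read r k =>
      simp only [exec, hp, List.mem_cons] at hb
      rcases hb with rfl | hb
      · simpa [hp] using (by simp [hp] : progs u ≠ Prog.done)
      · have := ih _ _ _ hb
        rcases eq_or_ne b.task u with h | h
        · rw [h, hp]; simp
        · rwa [Function.update_of_ne h] at this
    | write r v k =>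
      simp only [exec, hp, List.mem_cons] at hb
      rcases hb with rfl | hb
      · simpa [hp] using (by simp [hp] : progs u ≠ Prog.done)
      · have := ih _ _ _ hb
        rcases eq_or_ne b.task u with h | h
        · rw [h, hp]; simp
        · rwa [Function.update_of_ne h] at this

lemma allBefore_remove (l₁ : List (Access T R V)) (x : Access T R V) (l₂ : List (Access T R V))
    (f g : T) (h : AllBefore (l₁ ++ x :: l₂) f g) : AllBefore (l₁ ++ l₂) f g := by
  intro i j hi hj hfi hgj
  have len : (l₁ ++ x :: l₂).length = (l₁ ++ l₂).length + 1 := by simp; omega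
  set n := l₁.length with hn
  have key : ∀ (i : ℕ) (hi : i < (l₁ ++ l₂).length),
      ∃ (hi' : (if i < n then i else i + 1) < (l₁ ++ x :: l₂).length),
        (l₁ ++ x :: l₂).get ⟨if i < n then i else i + 1, hi'⟩ = (l₁ ++ l₂).get ⟨i, hi⟩ := by
    intro i hi
    have hi2 : i < n + l₂.length := by simpa using hi
    by_cases hin : i < n
    · rw [if_pos hin]
      refine ⟨by simp; omega, ?_⟩
      simp only [List.get_eq_getElem]
      rw [List.getElem_append_left hin, List.getElem_append_left hin]
    · push_neg at hin
      rw [if_neg (not_lt.2 hin)]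
      refine ⟨by simp; omega, ?_⟩
      simp only [List.get_eq_getElem]
      rw [List.getElem_append_right (by omega : n ≤ i + 1),
          List.getElem_append_right (by omega : n ≤ i)]
      have h3 : i + 1 - n = (i - n) + 1 := by omega
      simp [← hn, h3]
  obtain ⟨hi', hgeti⟩ := key i hi
  obtain ⟨hj', hgetj⟩ := key j hj
  have := h _ _ hi' hj' (by rw [hgeti]; exact hfi) (by rw [hgetj]; exact hgj)
  split_ifs at this <;> omega

end VC
namespace VC
variable {T R V : Type} [DecidableEq T] [DecidableEq R]

lemma pull (t : T) (r₀ : R) (w₀ : Bool) :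
    ∀ (σ : List T) (progs : T → Prog R V) (s : R → V),
    (exec progs s σ).1 = (fun _ => Prog.done) →
    headInfo (progs t) = some (r₀, w₀) →
    (∀ l₁ (b : Access T R V) l₂, (exec progs s σ).2.2 = l₁ ++ b :: l₂ → b.task ≠ t →
       b.res = r₀ → (w₀ = true ∨ b.isWrite = true) → ∀ c ∈ b :: l₂, c.task ≠ t) →
    ∃ (σ₀ : List T) (v : V) (pre post : List (Access T R V)),
      (exec progs s (t :: σ₀)).1 = (exec progs s σ).1 ∧
      (exec progs s (t :: σ₀)).2.1 = (exec progs s σ).2.1 ∧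
      (exec progs s σ).2.2 = pre ++ (⟨t, r₀, w₀, v⟩ : Access T R V) :: post ∧
      (exec progs s (t :: σ₀)).2.2 = (⟨t, r₀, w₀, v⟩ : Access T R V) :: (pre ++ post) ∧
      ∀ c ∈ pre, c.task ≠ t := by
  intro σ
  induction σ with
  | nil =>
    intro progs s hc hh _
    have : progs t = Prog.done := congrFun hc t
    simp [this, headInfo] at hh
  | cons u σ₂ ih =>
    intro progs s hc hh H
    by_cases hpu : progs u = Prog.done
    · have hexec : exec progs s (u :: σ₂) = exec progs s σ₂ := by simp [exec, hpu]
      rw [hexec] at hc H ⊢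
      exact ih progs s hc hh H
    · rcases eq_or_ne u t with rfl | hne
      · obtain ⟨v, hv⟩ := step_acc_some progs s (t := u) hh
        refine ⟨σ₂, v, [], (exec (step progs s u).1 (step progs s u).2.1 σ₂).2.2,
          rfl, rfl, ?_, ?_, by simp⟩
        · rw [exec_cons, hv]; simp
        · rw [exec_cons, hv]; simp
      · -- u ≠ t, u not done
        obtain ⟨r₁, w₁, hu⟩ : ∃ r₁ w₁, headInfo (progs u) = some (r₁, w₁) := by
          cases hp : progs u with
          | done => exact absurd hp hpu
          | read r k => exact ⟨r, false, by simp [headInfo]⟩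
          | write r v k => exact ⟨r, true, by simp [headInfo]⟩
        obtain ⟨v₁, hb₀⟩ := step_acc_some progs s hu
        have htr : (exec progs s (u :: σ₂)).2.2
            = (⟨u, r₁, w₁, v₁⟩ : Access T R V)
              :: (exec (step progs s u).1 (step progs s u).2.1 σ₂).2.2 := by
          rw [exec_cons, hb₀]; simp
        have hnc : ¬ (r₁ = r₀ ∧ (w₀ = true ∨ w₁ = true)) := by
          rintro ⟨hr, hw⟩
          have hnot := H [] ⟨u, r₁, w₁, v₁⟩ _ (by simpa using htr) hne hr hw
          obtain ⟨vt, hvt⟩ := exists_access t r₀ w₀ (u :: σ₂) progs s hc hh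
          rw [htr] at hvt
          exact hnot _ hvt rfl
        have hcswap : ∀ r₁' w₁' r₂' w₂', headInfo (progs t) = some (r₁', w₁') →
            headInfo (progs u) = some (r₂', w₂') → r₁' = r₂' → w₁' = false ∧ w₂' = false := by
          intro r₁' w₁' r₂' w₂' h1 h2 h3
          rw [hh] at h1; rw [hu] at h2
          have h1' : r₀ = r₁' ∧ w₀ = w₁' := by simpa using h1
          have h2' : r₁ = r₂' ∧ w₁ = w₂' := by simpa using h2
          obtain ⟨rfl, rfl⟩ := h1'
          obtain ⟨rfl, rfl⟩ := h2'
          have := fun hw => hnc ⟨h3.symm, hw⟩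
          cases w₀ <;> cases w₁ <;> simp_all
        have hc₂ : (exec (step progs s u).1 (step progs s u).2.1 σ₂).1
            = (fun _ => Prog.done) := by rw [exec_cons] at hc; exact hc
        have hh₂ : headInfo ((step progs s u).1 t) = some (r₀, w₀) := by
          rw [step_fst_of_ne progs s hne.symm]; exact hh
        have H₂ : ∀ l₁ (b : Access T R V) l₂,
            (exec (step progs s u).1 (step progs s u).2.1 σ₂).2.2 = l₁ ++ b :: l₂ →
            b.task ≠ t → b.res = r₀ → (w₀ = true ∨ b.isWrite = true) →
            ∀ c ∈ b :: l₂, c.task ≠ t := by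
          intro l₁ b l₂ heq hbt hbr hbw
          exact H ((⟨u, r₁, w₁, v₁⟩ : Access T R V) :: l₁) b l₂ (by rw [htr, heq]; simp)
            hbt hbr hbw
        obtain ⟨σ₀, v, pre, post, e1, e2, e3, e4, hpre⟩ := ih _ _ hc₂ hh₂ H₂
        obtain ⟨sw1, sw2, rest, sw3, sw4⟩ := swap progs s t u σ₀ hne.symm hcswap
        obtain ⟨v', hv'⟩ := step_acc_some progs s (t := t) hh
        have eu1 : (exec progs s (u :: t :: σ₀)).1
            = (exec (step progs s u).1 (step progs s u).2.1 (t :: σ₀)).1 := by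
          rw [exec_cons]
        have eu2 : (exec progs s (u :: t :: σ₀)).2.1
            = (exec (step progs s u).1 (step progs s u).2.1 (t :: σ₀)).2.1 := by
          rw [exec_cons]
        have eu3 : (exec progs s (u :: t :: σ₀)).2.2
            = (⟨u, r₁, w₁, v₁⟩ : Access T R V)
              :: (exec (step progs s u).1 (step progs s u).2.1 (t :: σ₀)).2.2 := by
          rw [exec_cons, hb₀]; simp
        have h1 := sw4
        rw [eu3, e4, hb₀, hv'] at h1
        simp only [Option.toList_some, List.singleton_append, List.cons_append] at h1
        injection h1 with _ h1
        injection h1 with h2 h3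
        injection h2 with _ _ _ h4
        subst h4
        subst h3
        refine ⟨u :: σ₀, v, (⟨u, r₁, w₁, v₁⟩ : Access T R V) :: pre, post, ?_, ?_, ?_, ?_, ?_⟩
        · rw [sw1, eu1, e1, exec_cons]
        · rw [sw2, eu2, e2, exec_cons]
        · rw [htr, e3]; simp
        · rw [sw3, hv', hb₀]; simp
        · rintro c hc'
          rcases List.mem_cons.mp hc' with rfl | hcp
          · exact hne
          · exact hpre c hcp
end VC
namespace VC
variable {T R V : Type} [DecidableEq T] [DecidableEq R]

lemma allBefore_split {tr : List (Access T R V)} {t u : T} (h : AllBefore tr t u) :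
    ∀ l₁ (b : Access T R V) l₂, tr = l₁ ++ b :: l₂ → b.task = u →
      ∀ c ∈ b :: l₂, c.task ≠ t := by
  intro l₁ b l₂ heq hbu c hcmem hct
  obtain ⟨k, hk, hck⟩ := List.mem_iff_getElem.mp hcmem
  subst heq
  have hn : l₁.length < (l₁ ++ b :: l₂).length := by simp
  have hnk : l₁.length + k < (l₁ ++ b :: l₂).length := by simp at hk ⊢; omega
  have hgk : (l₁ ++ b :: l₂).get ⟨l₁.length + k, hnk⟩ = c := by
    simp only [List.get_eq_getElem]
    rw [List.getElem_append_right (by omega : l₁.length ≤ l₁.length + k)]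
    simpa using hck
  have hgn : (l₁ ++ b :: l₂).get ⟨l₁.length, hn⟩ = b := by
    simp only [List.get_eq_getElem]
    rw [List.getElem_append_right (by omega : l₁.length ≤ l₁.length)]
    simp
  have := h _ _ hnk hn (by rw [hgk]; exact hct) (by rw [hgn]; exact hbu)
  omega

lemma main_lemma (D : T → T → Prop) :
    ∀ (τ : List T) (progs : T → Prog R V) (s : R → V) (σ : List T),
    Completes progs s σ → RespectsDAG D (trace progs s σ) →
    ValidTrace D (trace progs s σ) →
    Completes progs s τ → RespectsDAG D (trace progs s τ) →
    (∀ u : T, (trace progs s τ).filter (fun x => decide (x.task = u))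
        = (trace progs s σ).filter (fun x => decide (x.task = u))) ∧
    finalState progs s τ = finalState progs s σ := by
  intro τ
  induction τ with
  | nil =>
    intro progs s σ hcσ _ _ hcτ _
    have hdone : ∀ x, progs x = Prog.done := fun x => congrFun hcτ x
    have hσ := exec_all_done σ progs s hdone
    constructor
    · intro u
      simp [trace, exec, hσ]
    · simp [finalState, exec, hσ]
  | cons t τ' ih =>
    intro progs s σ hcσ hrσ hvσ hcτ hrτ
    by_cases hpt : progs t = Prog.done
    · have hexec : exec progs s (t :: τ') = exec progs s τ' := by simp [exec, hpt]
      have h1 : Completes progs s (t :: τ') = Completes progs s τ' := by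
        simp [Completes, hexec]
      have h2 : trace progs s (t :: τ') = trace progs s τ' := by simp [trace, hexec]
      have h3 : finalState progs s (t :: τ') = finalState progs s τ' := by
        simp [finalState, hexec]
      rw [h2] at hrτ
      rw [h2, h3]
      exact ih progs s σ hcσ hrσ hvσ (h1 ▸ hcτ) hrτ
    · obtain ⟨r₀, w₀, hh⟩ : ∃ r₀ w₀, headInfo (progs t) = some (r₀, w₀) := by
        cases hp : progs t with
        | done => exact absurd hp hpt
        | read r k => exact ⟨r, false, by simp [headInfo]⟩
        | write r v k => exact ⟨r, true, by simp [headInfo]⟩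
      obtain ⟨v', hv'⟩ := step_acc_some progs s (t := t) hh
      have hcτ' : (exec (step progs s t).1 (step progs s t).2.1 τ').1
          = (fun _ => Prog.done) := by
        have := hcτ; rw [Completes, exec_cons] at this; exact this
      have trτ : trace progs s (t :: τ')
          = (⟨t, r₀, w₀, v'⟩ : Access T R V)
            :: (exec (step progs s t).1 (step progs s t).2.1 τ').2.2 := by
        rw [trace, exec_cons, hv']; simp
      -- establish the hypothesis of `pull`
      have H : ∀ l₁ (b : Access T R V) l₂, (exec progs s σ).2.2 = l₁ ++ b :: l₂ →
          b.task ≠ t → b.res = r₀ → (w₀ = true ∨ b.isWrite = true) →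
          ∀ c ∈ b :: l₂, c.task ≠ t := by
        intro l₁ b l₂ heq hbt hbr hbw
        have hbmem : b ∈ (exec progs s σ).2.2 := by rw [heq]; simp
        have hbne : progs b.task ≠ Prog.done := mem_ne_done σ progs s b hbmem
        obtain ⟨r₁, w₁, hu⟩ : ∃ r₁ w₁, headInfo (progs b.task) = some (r₁, w₁) := by
          cases hp : progs b.task with
          | done => exact absurd hp hbne
          | read r k => exact ⟨r, false, by simp [headInfo]⟩
          | write r v k => exact ⟨r, true, by simp [headInfo]⟩
        obtain ⟨vt, hvt⟩ := exists_access t r₀ w₀ σ progs s hcσ hh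
        have hconf : Conflict (trace progs s σ) t b.task := by
          refine ⟨hbt.symm, ⟨t, r₀, w₀, vt⟩, hvt, b, hbmem, rfl, rfl, hbr.symm, ?_⟩
          exact hbw
        have htu : Relation.TransGen D t b.task := by
          rcases hvσ t b.task hconf with h | h
          · exact h
          · exfalso
            obtain ⟨vu, hvu⟩ := exists_access b.task r₁ w₁ (t :: τ') progs s hcτ hu
            have hab := hrτ _ _ h
            have trτe : (exec progs s (t :: τ')).2.2
              = (⟨t, r₀, w₀, v'⟩ : Access T R V)
                :: (exec (step progs s t).1 (step progs s t).2.1 τ').2.2 := trτ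
            rw [trτ] at hab
            rw [trτe] at hvu
            obtain ⟨j, hj, hgj⟩ := List.mem_iff_getElem.mp hvu
            have h0 : 0 < ((⟨t, r₀, w₀, v'⟩ : Access T R V)
              :: (exec (step progs s t).1 (step progs s t).2.1 τ').2.2).length := by simp
            have := hab j 0 hj h0 (by simp [hgj]) (by simp)
            omega
        exact allBefore_split (hrσ t b.task htu) l₁ b l₂ heq rfl
      obtain ⟨σ₀, v, pre, post, e1, e2, e3, e4, hpre⟩ :=
        pull t r₀ w₀ σ progs s hcσ hh H
      -- unpack `t :: σ₀`
      have e4' : (exec progs s (t :: σ₀)).2.2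
          = (⟨t, r₀, w₀, v'⟩ : Access T R V)
            :: (exec (step progs s t).1 (step progs s t).2.1 σ₀).2.2 := by
        rw [exec_cons, hv']; simp
      rw [e4'] at e4
      injection e4 with e4h e4t
      have hvv : v' = v := congrArg Access.val e4h
      subst hvv
      have e1' : (exec (step progs s t).1 (step progs s t).2.1 σ₀).1
          = (exec progs s σ).1 := by rw [← e1, exec_cons]
      have e2' : (exec (step progs s t).1 (step progs s t).2.1 σ₀).2.1
          = (exec progs s σ).2.1 := by rw [← e2, exec_cons]
      -- IH hypotheses
      have ihc : Completes (step progs s t).1 (step progs s t).2.1 σ₀ := by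
        rw [Completes, e1']; exact hcσ
      have ihtr : trace (step progs s t).1 (step progs s t).2.1 σ₀ = pre ++ post := e4t
      have ihr : RespectsDAG D (trace (step progs s t).1 (step progs s t).2.1 σ₀) := by
        rw [ihtr]
        intro f g hfg
        exact allBefore_remove pre ⟨t, r₀, w₀, v'⟩ post f g (by rw [← e3]; exact hrσ f g hfg)
      have ihv : ValidTrace D (trace (step progs s t).1 (step progs s t).2.1 σ₀) := by
        rw [ihtr]
        rintro t₁ t₂ ⟨hne, a, ha, b, hb, hrest⟩
        have e3' : trace progs s σ = pre ++ (⟨t, r₀, w₀, v'⟩ : Access T R V) :: post := e3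
        refine hvσ t₁ t₂ ⟨hne, a, ?_, b, ?_, hrest⟩ <;>
          · rw [e3']; simp at ha hb ⊢; tauto
      have ihcτ : Completes (step progs s t).1 (step progs s t).2.1 τ' := hcτ'
      have ihrτ : RespectsDAG D (trace (step progs s t).1 (step progs s t).2.1 τ') := by
        intro f g hfg
        exact allBefore_remove [] ⟨t, r₀, w₀, v'⟩ _ f g (by
          have := hrτ f g hfg
          rw [trτ] at this
          exact this)
      obtain ⟨hfilt, hfin⟩ := ih (step progs s t).1 (step progs s t).2.1 σ₀
        ihc ihr ihv ihcτ ihrτ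
      constructor
      · intro u
        have hτeq : trace progs s (t :: τ')
            = (⟨t, r₀, w₀, v'⟩ : Access T R V)
              :: trace (step progs s t).1 (step progs s t).2.1 τ' := trτ
        have e3' : trace progs s σ = pre ++ (⟨t, r₀, w₀, v'⟩ : Access T R V) :: post := e3
        rw [hτeq, e3']
        rcases eq_or_ne u t with rfl | hut
        · have hprenil : pre.filter (fun x => decide (x.task = u)) = [] := by
            rw [List.filter_eq_nil_iff]
            intro c hc
            simp [hpre c hc]
          simp only [List.filter_cons, List.filter_append, hprenil, decide_eq_true_eq]
          rw [hfilt u, ihtr]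
          simp [List.filter_append, hprenil]
        · simp only [List.filter_cons, List.filter_append, decide_eq_true_eq,
            if_neg (by simpa using hut.symm : ¬ (⟨t, r₀, w₀, v'⟩ : Access T R V).task = u)]
          rw [hfilt u, ihtr]
          simp [List.filter_append]
      · have hfτ : finalState progs s (t :: τ')
            = finalState (step progs s t).1 (step progs s t).2.1 τ' := by
          rw [finalState, finalState, exec_cons]
        rw [hfτ, hfin, finalState, finalState, e2']
end VC

/-- If some build from a given configuration (dependency DAG, deterministic
tasks, initial shared state) is valid, then every build from that configuration
is valid, and all builds produce the same final shared state. -/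
theorem valid_configuration {T R V : Type} [DecidableEq T] [DecidableEq R]
    [Fintype T] (D : T → T → Prop) (progs : T → Prog R V) (s₀ : R → V)
    (hsome : ∃ sched, IsBuild D progs s₀ sched ∧ ValidTrace D (trace progs s₀ sched)) :
    ∀ sched₁ sched₂, IsBuild D progs s₀ sched₁ → IsBuild D progs s₀ sched₂ →
      ValidTrace D (trace progs s₀ sched₁) ∧
      finalState progs s₀ sched₁ = finalState progs s₀ sched₂ := by
  obtain ⟨σ, ⟨hcσ, hrσ⟩, hvσ⟩ := hsome
  intro sched₁ sched₂ h₁ h₂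
  obtain ⟨hc₁, hr₁⟩ := h₁
  obtain ⟨hc₂, hr₂⟩ := h₂
  obtain ⟨hfilt₁, hfin₁⟩ := VC.main_lemma D sched₁ progs s₀ σ hcσ hrσ hvσ hc₁ hr₁
  obtain ⟨_, hfin₂⟩ := VC.main_lemma D sched₂ progs s₀ σ hcσ hrσ hvσ hc₂ hr₂
  constructor
  · rintro t₁ t₂ ⟨hne, a, ha, b, hb, hrest⟩
    have hmem : ∀ c : Access T R V, c ∈ trace progs s₀ sched₁ → c ∈ trace progs s₀ σ := by
      intro c hc
      have : c ∈ (trace progs s₀ sched₁).filter (fun x => decide (x.task = c.task)) :=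
        List.mem_filter.mpr ⟨hc, by simp⟩
      rw [hfilt₁ c.task] at this
      exact (List.mem_filter.mp this).1
    exact hvσ t₁ t₂ ⟨hne, a, hmem a ha, b, hmem b hb, hrest⟩
  · rw [hfin₁, hfin₂]
end

section
/- In a valid build, the final value of each resource equals the value written by the last task (in any topological order consistent with the DAG) that writes that resource, or the initial value if no task writes it. -/
/-- Last write value in a trace, with default. -/
def lastVal {T R V : Type} (l : List (Access T R V)) (d : V) : V :=
  match l.getLast? with
  | some a => a.val
  | none => d

lemma lastVal_cons {T R V : Type} (a : Access T R V) (l : List (Access T R V)) (d : V) :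
    lastVal (a :: l) d = lastVal l a.val := by
  cases l with
  | nil => rfl
  | cons b l => simp [lastVal, List.getLast?]

lemma exec_state {T R V : Type} [DecidableEq T] [DecidableEq R] (r : R) :
    ∀ (sched : List T) (progs : T → Prog R V) (s : R → V),
      (exec progs s sched).2.1 r =
        lastVal ((exec progs s sched).2.2.filter
          (fun a => decide (a.res = r ∧ a.isWrite = true))) (s r) := by
  intro sched
  induction sched with
  | nil => intro progs s; rfl
  | cons t ts ih =>
      intro progs s
      show (match progs t with
            | .done => _
            | .read r k => _
            | .write r v k => _ : (T → Prog R V) × (R → V) × List (Access T R V)).2.1 r = _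
      cases h : progs t with
      | done => simp only [exec, h]; exact ih _ _
      | read r' k => simp only [exec, h, List.filter]; simpa using ih _ _
      | write r' v k =>
          simp only [exec, h, List.filter]
          by_cases hr : r' = r
          · subst hr
            simp only [and_self, true_and, decide_true]
            rw [lastVal_cons]
            have := ih (Function.update progs t k) (Function.update s r' v)
            simpa [Function.update_self] using this
          · simp only [hr, false_and, decide_false]
            have := ih (Function.update progs t k) (Function.update s r' v)
            rw [this, Function.update_of_ne (Ne.symm hr)]

/-- If the last element of `filter p` satisfies `q` and `q` implies `p`,
then it is also the last element of `filter q`. -/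
lemma filter_getLast_aux {α : Type*} (p q : α → Bool) (hpq : ∀ a, q a = true → p a = true) :
    ∀ (l : List α) (a : α), (l.filter p).getLast? = some a → q a = true →
      (l.filter q).getLast? = some a := by
  intro l
  induction l using List.reverseRecOn with
  | nil => intro a h; simp at h
  | append_singleton l x ih =>
      intro a h hq
      rw [List.filter_append] at h ⊢
      by_cases hp : p x = true
      · simp only [List.filter_singleton, hp, cond_true] at h
        rw [List.getLast?_concat] at h
        have hx : x = a := by simpa using h
        subst hx
        simp only [List.filter_singleton, hq, cond_true]
        rw [List.getLast?_concat]
      · have hpf : p x = false := by simpa using hp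
        have hqf : q x = false := by
          cases hqe : q x with
          | false => rfl
          | true => exact absurd (hpq x hqe) hp
        simp only [List.filter_singleton, hpf, hqf, cond_false, List.append_nil] at h ⊢
        exact ih a h hq

/-- The last element of `filter p` occurs at an index after which nothing
satisfies `p`. -/
lemma filter_getLast_index {α : Type*} (p : α → Bool) :
    ∀ (l : List α) (a : α), (l.filter p).getLast? = some a →
      ∃ (j : ℕ) (hj : j < l.length), l.get ⟨j, hj⟩ = a ∧
        ∀ (k : ℕ) (hk : k < l.length), j < k → ¬ p (l.get ⟨k, hk⟩) = true := by
  intro l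
  induction l using List.reverseRecOn with
  | nil => intro a h; simp at h
  | append_singleton l x ih =>
      intro a h
      rw [List.filter_append] at h
      by_cases hp : p x = true
      · simp only [List.filter_singleton, hp, cond_true] at h
        rw [List.getLast?_concat] at h
        have hx : x = a := by simpa using h
        subst hx
        refine ⟨l.length, by simp, ?_, ?_⟩
        · simp
        · intro k hk hlt
          simp at hk
          omega
      · have hpf : p x = false := by simpa using hp
        simp only [List.filter_singleton, hpf, cond_false, List.append_nil] at h
        obtain ⟨j, hj, hget, hafter⟩ := ih a h
        refine ⟨j, by simp; omega, ?_, ?_⟩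
        · simpa [List.getElem_append_left hj] using hget
        · intro k hk hlt
          simp at hk
          rcases lt_or_eq_of_le (show k ≤ l.length by omega) with hk' | hk'
          · have := hafter k hk' hlt
            simpa [List.getElem_append_left hk'] using this
          · subst hk'
            have : (l ++ [x]).get ⟨l.length, by simp⟩ = x := by simp
            rw [this]; exact hp

/-- In a valid build, the final value of each resource equals the value written
by the DAG-last task writing that resource (its last write in the trace), or
the initial value if no task writes it.  "DAG-last" means every other writer of
`r` has a directed path to `t`; in a valid build this is equivalent to being
last in any topological order consistent with the DAG. -/
theorem valid_build_last_writer {T R V : Type} [DecidableEq T] [DecidableEq R]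
    [Fintype T] (D : T → T → Prop) (progs : T → Prog R V) (s₀ : R → V)
    (sched : List T) (hb : IsBuild D progs s₀ sched)
    (hvalid : ValidTrace D (trace progs s₀ sched)) (r : R) :
    -- if no task writes `r`, the final value is the initial value
    ((∀ a ∈ trace progs s₀ sched, ¬ (a.res = r ∧ a.isWrite = true)) →
      finalState progs s₀ sched r = s₀ r) ∧
    -- if `t` writes `r` and every other writer of `r` precedes `t` in the DAG,
    -- then the final value of `r` is the value of `t`'s last write to `r`
    (∀ t : T, (∃ a ∈ trace progs s₀ sched, a.task = t ∧ a.res = r ∧ a.isWrite = true) →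
      (∀ t', t' ≠ t →
          (∃ a ∈ trace progs s₀ sched, a.task = t' ∧ a.res = r ∧ a.isWrite = true) →
          Relation.TransGen D t' t) →
      ∀ a, ((trace progs s₀ sched).filter
              (fun a => a.task = t ∧ a.res = r ∧ a.isWrite = true)).getLast? = some a →
        finalState progs s₀ sched r = a.val) := by
  set tr := trace progs s₀ sched with htr
  have hfin : finalState progs s₀ sched r =
      lastVal (tr.filter (fun a => decide (a.res = r ∧ a.isWrite = true))) (s₀ r) :=
    exec_state r sched progs s₀
  constructor
  · intro hnone
    have : tr.filter (fun a => decide (a.res = r ∧ a.isWrite = true)) = [] := by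
      rw [List.filter_eq_nil_iff]
      intro a ha
      simpa using hnone a ha
    rw [hfin, this]; rfl
  · intro t ht hdag a hlast
    set p : Access T R V → Bool := fun a => decide (a.res = r ∧ a.isWrite = true) with hp
    set q : Access T R V → Bool := fun a => decide (a.task = t ∧ a.res = r ∧ a.isWrite = true)
      with hq
    have hqp : ∀ a, q a = true → p a = true := by
      intro a ha; simp [hp, hq] at *; tauto
    -- filter p is nonempty
    obtain ⟨c, hc, hct, hcr, hcw⟩ := ht
    have hcmem : c ∈ tr.filter p := by
      rw [List.mem_filter]; exact ⟨hc, by simp [hp, hcr, hcw]⟩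
    obtain ⟨b, hbl⟩ : ∃ b, (tr.filter p).getLast? = some b := by
      cases hfp : (tr.filter p).getLast? with
      | some b => exact ⟨b, rfl⟩
      | none =>
          rw [List.getLast?_eq_none_iff] at hfp
          rw [hfp] at hcmem; simp at hcmem
    obtain ⟨j, hj, hget, hafter⟩ := filter_getLast_index p tr b hbl
    have hbmem : b ∈ tr.filter p := by
      obtain ⟨hne, hbe⟩ := List.mem_getLast?_eq_getLast (l := tr.filter p) (x := b) hbl
      rw [hbe]; exact List.getLast_mem hne
    rw [List.mem_filter] at hbmem
    have hbr : b.res = r ∧ b.isWrite = true := by simpa [hp] using hbmem.2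
    -- the task of b is t
    have hbt : b.task = t := by
      by_contra hne
      have hconf : Relation.TransGen D b.task t := by
        apply hdag b.task hne
        exact ⟨b, hbmem.1, rfl, hbr.1, hbr.2⟩
      have hall : AllBefore tr b.task t := hb.2 b.task t hconf
      obtain ⟨i, hi⟩ := List.mem_iff_get.mp hc
      have hji : j < i := hall j i hj i.2 (by rw [hget]) (by rw [hi]; exact hct)
      exact hafter i i.2 hji (by rw [hi]; simp [hp, hcr, hcw])
    -- b satisfies q
    have hqb : q b = true := by simp [hq, hbt, hbr.1, hbr.2]
    have := filter_getLast_aux p q hqp tr b hbl hqb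
    have hba : b = a := by
      rw [hlast] at this; exact (Option.some_inj.mp this).symm
    subst hba
    rw [hfin]
    unfold lastVal
    rw [hbl]
end
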